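/- Let H be a 2×2 complex Hermitian matrix and let ρ : ℝ → M₂(ℂ) be a curve satisfying the imaginary-time (Wick-rotated) equation ρ'(τ) = −(Hρ(τ) + ρ(τ)H) entrywise. Then for every θ ∈ (0,π) and φ ∈ ℝ, the function τ ↦ Q_{ρ(τ)}(θ,φ) is differentiable with derivative −4π·( Q_H·Q_{ρ(τ)} + ∂Q_H/∂θ · ∂Q_{ρ(τ)}/∂θ + (1/sin²θ)·∂Q_H/∂φ · ∂Q_{ρ(τ)}/∂φ ); that is, imaginary-time evolution is a cosine-bracket gradient flow of the Q function. -/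

import Mathlib

open Matrix Complex Real MeasureTheory

noncomputable section

/-- The spin coherent state |θ,φ⟩ = cos(θ/2)|0⟩ + e^{iφ} sin(θ/2)|1⟩. -/
def cohVec (θ φ : ℝ) : Fin 2 → ℂ :=
  ![((Real.cos (θ / 2) : ℝ) : ℂ),
    Complex.exp (Complex.I * (φ : ℂ)) * ((Real.sin (θ / 2) : ℝ) : ℂ)]

/-- The Husimi Q function of a 2×2 complex matrix. -/
def Qfun (A : Matrix (Fin 2) (Fin 2) ℂ) (θ φ : ℝ) : ℂ :=
  (1 / (2 * Real.pi) : ℂ) *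
    ∑ k, ∑ l, (starRingEnd ℂ) (cohVec θ φ k) * A k l * cohVec θ φ l

/-- ∂Q_A/∂θ. -/
def Qθ (A : Matrix (Fin 2) (Fin 2) ℂ) (θ φ : ℝ) : ℂ :=
  deriv (fun t => Qfun A t φ) θ

/-- ∂Q_A/∂φ. -/
def Qφ (A : Matrix (Fin 2) (Fin 2) ℂ) (θ φ : ℝ) : ℂ :=
  deriv (fun p => Qfun A θ p) φ

lemma Qfun_eq (A : Matrix (Fin 2) (Fin 2) ℂ) (θ φ : ℝ) :
    Qfun A θ φ = (1 / (2 * Real.pi) : ℂ) *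
      (((Real.cos (θ/2) : ℝ) : ℂ) * ((Real.cos (θ/2) : ℝ) : ℂ) * A 0 0
        + (((Real.cos (θ/2) : ℝ) : ℂ) * ((Real.sin (θ/2) : ℝ) : ℂ) * Complex.exp (Complex.I * φ)) * A 0 1
        + (((Real.cos (θ/2) : ℝ) : ℂ) * ((Real.sin (θ/2) : ℝ) : ℂ) * Complex.exp (-(Complex.I * φ))) * A 1 0
        + ((Real.sin (θ/2) : ℝ) : ℂ) * ((Real.sin (θ/2) : ℝ) : ℂ) * A 1 1) := by
  simp only [Qfun, cohVec, Fin.sum_univ_two, Matrix.cons_val_zero, Matrix.cons_val_one,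
    Matrix.head_cons, _root_.map_mul, Complex.conj_ofReal, ← Complex.exp_conj, Complex.conj_I,
    map_neg, neg_mul]
  have hEF : Complex.exp (Complex.I * φ) * Complex.exp (-(Complex.I * φ)) = 1 := by
    rw [← Complex.exp_add]; simp
  linear_combination (1 / (2 * Real.pi) : ℂ) * ((Real.sin (θ/2) : ℝ) : ℂ)^2 * A 1 1 * hEF

end
noncomputable section
lemma hasDerivAt_Qθ (A : Matrix (Fin 2) (Fin 2) ℂ) (θ φ : ℝ) :
    HasDerivAt (fun t => Qfun A t φ)
      ((1 / (2 * Real.pi) : ℂ) *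
        ((-(((Real.cos (θ/2) : ℝ) : ℂ) * ((Real.sin (θ/2) : ℝ) : ℂ))) * A 0 0
          + ((((Real.cos (θ/2) : ℝ) : ℂ)^2 - ((Real.sin (θ/2) : ℝ) : ℂ)^2)/2) *
              (Complex.exp (Complex.I * φ) * A 0 1 + Complex.exp (-(Complex.I * φ)) * A 1 0)
          + (((Real.cos (θ/2) : ℝ) : ℂ) * ((Real.sin (θ/2) : ℝ) : ℂ)) * A 1 1)) θ := by
  have e : (fun t => Qfun A t φ) = fun t => (1 / (2 * Real.pi) : ℂ) *
      (((Real.cos (t/2) : ℝ) : ℂ) * ((Real.cos (t/2) : ℝ) : ℂ) * A 0 0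
        + (((Real.cos (t/2) : ℝ) : ℂ) * ((Real.sin (t/2) : ℝ) : ℂ) * Complex.exp (Complex.I * φ)) * A 0 1
        + (((Real.cos (t/2) : ℝ) : ℂ) * ((Real.sin (t/2) : ℝ) : ℂ) * Complex.exp (-(Complex.I * φ))) * A 1 0
        + ((Real.sin (t/2) : ℝ) : ℂ) * ((Real.sin (t/2) : ℝ) : ℂ) * A 1 1) :=
    funext fun t => Qfun_eq A t φ
  rw [e]
  have h2 : HasDerivAt (fun t : ℝ => t / 2) (1/2 : ℝ) θ := by
    simpa using (hasDerivAt_id θ).div_const 2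
  have hc : HasDerivAt (fun t : ℝ => ((Real.cos (t/2) : ℝ) : ℂ))
      (((-Real.sin (θ/2) * (1/2) : ℝ) : ℂ)) θ := by
    exact (((Real.hasDerivAt_cos (θ/2)).comp θ h2)).ofReal_comp
  have hs : HasDerivAt (fun t : ℝ => ((Real.sin (t/2) : ℝ) : ℂ))
      (((Real.cos (θ/2) * (1/2) : ℝ) : ℂ)) θ := by
    exact (((Real.hasDerivAt_sin (θ/2)).comp θ h2)).ofReal_comp
  have h := (((((hc.mul hc).mul_const (A 0 0)).add
      (((hc.mul hs).mul_const (Complex.exp (Complex.I * φ))).mul_const (A 0 1))).add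
      (((hc.mul hs).mul_const (Complex.exp (-(Complex.I * φ)))).mul_const (A 1 0))).add
      ((hs.mul hs).mul_const (A 1 1))).const_mul (1 / (2 * Real.pi) : ℂ)
  refine h.congr_deriv (Eq.symm ?_)
  push_cast
  ring

lemma hasDerivAt_Qφ (A : Matrix (Fin 2) (Fin 2) ℂ) (θ φ : ℝ) :
    HasDerivAt (fun p => Qfun A θ p)
      ((1 / (2 * Real.pi) : ℂ) *
        (Complex.I * (((Real.cos (θ/2) : ℝ) : ℂ) * ((Real.sin (θ/2) : ℝ) : ℂ)) *
          (Complex.exp (Complex.I * φ) * A 0 1 - Complex.exp (-(Complex.I * φ)) * A 1 0))) φ := by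
  have e : (fun p => Qfun A θ p) = fun p : ℝ => (1 / (2 * Real.pi) : ℂ) *
      (((Real.cos (θ/2) : ℝ) : ℂ) * ((Real.cos (θ/2) : ℝ) : ℂ) * A 0 0
        + (((Real.cos (θ/2) : ℝ) : ℂ) * ((Real.sin (θ/2) : ℝ) : ℂ) * Complex.exp (Complex.I * (p:ℂ))) * A 0 1
        + (((Real.cos (θ/2) : ℝ) : ℂ) * ((Real.sin (θ/2) : ℝ) : ℂ) * Complex.exp (-(Complex.I * (p:ℂ)))) * A 1 0
        + ((Real.sin (θ/2) : ℝ) : ℂ) * ((Real.sin (θ/2) : ℝ) : ℂ) * A 1 1) :=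
    funext fun p => Qfun_eq A θ p
  rw [e]
  have hid : HasDerivAt (fun p : ℝ => ((p : ℝ) : ℂ)) 1 φ := by
    simpa using (hasDerivAt_id φ).ofReal_comp
  have hE : HasDerivAt (fun p : ℝ => Complex.exp (Complex.I * (p:ℂ)))
      (Complex.exp (Complex.I * φ) * Complex.I) φ := by
    simpa using (hid.const_mul Complex.I).cexp
  have hF : HasDerivAt (fun p : ℝ => Complex.exp (-(Complex.I * (p:ℂ))))
      (Complex.exp (-(Complex.I * φ)) * (-Complex.I)) φ := by
    simpa using ((hid.const_mul Complex.I).neg).cexp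
  have h := ((((hasDerivAt_const φ (((Real.cos (θ/2) : ℝ) : ℂ) * ((Real.cos (θ/2) : ℝ) : ℂ) * A 0 0)).add
      ((hE.const_mul (((Real.cos (θ/2) : ℝ) : ℂ) * ((Real.sin (θ/2) : ℝ) : ℂ))).mul_const (A 0 1))).add
      ((hF.const_mul (((Real.cos (θ/2) : ℝ) : ℂ) * ((Real.sin (θ/2) : ℝ) : ℂ))).mul_const (A 1 0))).add
      (hasDerivAt_const φ (((Real.sin (θ/2) : ℝ) : ℂ) * ((Real.sin (θ/2) : ℝ) : ℂ) * A 1 1))).const_mul (1 / (2 * Real.pi) : ℂ)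
  refine h.congr_deriv (Eq.symm ?_)
  ring
end


/-- imaginary-time (Wick-rotated) evolution is a cosine-bracket
gradient flow of the Q function. -/
theorem imaginary_time_evolution_is_cosine_bracket_flow
    (H : Matrix (Fin 2) (Fin 2) ℂ) (hH : H.IsHermitian)
    (ρ : ℝ → Matrix (Fin 2) (Fin 2) ℂ)
    (hρ : ∀ τ, ∀ i j, HasDerivAt (fun τ' => ρ τ' i j)
      ((-(H * ρ τ + ρ τ * H)) i j) τ) :
    ∀ θ ∈ Set.Ioo (0 : ℝ) Real.pi, ∀ φ : ℝ, ∀ τ : ℝ,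
      HasDerivAt (fun τ' => Qfun (ρ τ') θ φ)
        (-(4 * Real.pi : ℂ) *
          (Qfun H θ φ * Qfun (ρ τ) θ φ + Qθ H θ φ * Qθ (ρ τ) θ φ
            + ((1 / (Real.sin θ) ^ 2 : ℝ) : ℂ) * Qφ H θ φ * Qφ (ρ τ) θ φ)) τ := by

  intro θ hθ φ τ
  have hsin : Real.sin θ ≠ 0 := ne_of_gt (Real.sin_pos_of_pos_of_lt_pi hθ.1 hθ.2)
  have hKr : (1 / Real.sin θ ^ 2) * (Real.cos (θ/2) * Real.sin (θ/2)) ^ 2 = 1/4 := by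
    have h2 : Real.sin θ = 2 * Real.sin (θ/2) * Real.cos (θ/2) := by
      have := Real.sin_two_mul (θ/2)
      rw [show 2*(θ/2) = θ by ring] at this
      exact this
    rw [h2] at hsin ⊢
    have hs2 : Real.sin (θ/2) ≠ 0 := fun h => hsin (by rw [h]; ring)
    have hc2 : Real.cos (θ/2) ≠ 0 := fun h => hsin (by rw [h]; ring)
    field_simp
    ring
  have hK : ((1 / (Real.sin θ) ^ 2 : ℝ) : ℂ) * (((Real.cos (θ/2) : ℝ) : ℂ) * ((Real.sin (θ/2) : ℝ) : ℂ)) ^ 2 = 1/4 := by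
    have hKc := congrArg (fun x : ℝ => (x : ℂ)) hKr
    push_cast at hKc ⊢
    linear_combination hKc
  have hφ : ((1 / (Real.sin θ) ^ 2 : ℝ) : ℂ) * Qφ H θ φ * Qφ (ρ τ) θ φ
      = -((1/(2*Real.pi) : ℂ))^2 * (1/4) * (((Complex.exp (Complex.I * (φ:ℂ))) * H 0 1 - (Complex.exp (-(Complex.I * (φ:ℂ)))) * H 1 0) * ((Complex.exp (Complex.I * (φ:ℂ))) * ρ τ 0 1 - (Complex.exp (-(Complex.I * (φ:ℂ)))) * ρ τ 1 0)) := by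
    simp only [Qφ]
    rw [(hasDerivAt_Qφ H θ φ).deriv, (hasDerivAt_Qφ (ρ τ) θ φ).deriv]
    linear_combination (((1 / (Real.sin θ) ^ 2 : ℝ) : ℂ) * ((1/(2*Real.pi):ℂ))^2 * (((Real.cos (θ/2) : ℝ) : ℂ) * ((Real.sin (θ/2) : ℝ) : ℂ))^2 * (((Complex.exp (Complex.I * (φ:ℂ))) * H 0 1 - (Complex.exp (-(Complex.I * (φ:ℂ)))) * H 1 0) * ((Complex.exp (Complex.I * (φ:ℂ))) * ρ τ 0 1 - (Complex.exp (-(Complex.I * (φ:ℂ)))) * ρ τ 1 0))) * Complex.I_sq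
      - (((1/(2*Real.pi):ℂ))^2 * (((Complex.exp (Complex.I * (φ:ℂ))) * H 0 1 - (Complex.exp (-(Complex.I * (φ:ℂ)))) * H 1 0) * ((Complex.exp (Complex.I * (φ:ℂ))) * ρ τ 0 1 - (Complex.exp (-(Complex.I * (φ:ℂ)))) * ρ τ 1 0))) * hK
  have e : (fun τ' => Qfun (ρ τ') θ φ) = fun τ' => (1 / (2 * Real.pi) : ℂ) *
      (((Real.cos (θ/2) : ℝ) : ℂ) * ((Real.cos (θ/2) : ℝ) : ℂ) * ρ τ' 0 0
        + (((Real.cos (θ/2) : ℝ) : ℂ) * ((Real.sin (θ/2) : ℝ) : ℂ) * (Complex.exp (Complex.I * (φ:ℂ)))) * ρ τ' 0 1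
        + (((Real.cos (θ/2) : ℝ) : ℂ) * ((Real.sin (θ/2) : ℝ) : ℂ) * (Complex.exp (-(Complex.I * (φ:ℂ))))) * ρ τ' 1 0
        + ((Real.sin (θ/2) : ℝ) : ℂ) * ((Real.sin (θ/2) : ℝ) : ℂ) * ρ τ' 1 1) :=
    funext fun τ' => Qfun_eq (ρ τ') θ φ
  rw [e]
  have hder := (((((hρ τ 0 0).const_mul (((Real.cos (θ/2) : ℝ) : ℂ) * ((Real.cos (θ/2) : ℝ) : ℂ))).add
      ((hρ τ 0 1).const_mul (((Real.cos (θ/2) : ℝ) : ℂ) * ((Real.sin (θ/2) : ℝ) : ℂ) * (Complex.exp (Complex.I * (φ:ℂ)))))).add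
      ((hρ τ 1 0).const_mul (((Real.cos (θ/2) : ℝ) : ℂ) * ((Real.sin (θ/2) : ℝ) : ℂ) * (Complex.exp (-(Complex.I * (φ:ℂ))))))).add
      ((hρ τ 1 1).const_mul (((Real.sin (θ/2) : ℝ) : ℂ) * ((Real.sin (θ/2) : ℝ) : ℂ)))).const_mul ((1 / (2 * Real.pi)) : ℂ)
  refine hder.congr_deriv (Eq.symm ?_)
  rw [hφ, Qfun_eq H θ φ, Qfun_eq (ρ τ) θ φ]
  simp only [Qθ]
  rw [(hasDerivAt_Qθ H θ φ).deriv, (hasDerivAt_Qθ (ρ τ) θ φ).deriv]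
  simp only [Matrix.neg_apply, Matrix.add_apply, Matrix.mul_apply, Fin.sum_univ_two]
  have hv : ((Real.pi : ℝ) : ℂ) * (((Real.pi : ℝ) : ℂ))⁻¹ = 1 :=
    mul_inv_cancel₀ (by exact_mod_cast Real.pi_ne_zero)
  have h1 : ((Real.cos (θ/2) : ℝ) : ℂ)^2 + ((Real.sin (θ/2) : ℝ) : ℂ)^2 = 1 := by exact_mod_cast Real.cos_sq_add_sin_sq (θ/2)
  have h2 : (Complex.exp (Complex.I * (φ:ℂ))) * (Complex.exp (-(Complex.I * (φ:ℂ)))) = 1 := by rw [← Complex.exp_add]; simp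
  linear_combination
    (((1:ℂ)/2) * (((Real.pi : ℝ) : ℂ))⁻¹ * (H 1 0) * (ρ τ 0 1)
      + ((1:ℂ)/2) * (((Real.pi : ℝ) : ℂ))⁻¹ * (H 0 1) * (ρ τ 1 0)
      + ((1:ℂ)/1) * (((Real.pi : ℝ) : ℂ))⁻¹ * (H 0 0) * (ρ τ 0 0)
      + ((-1:ℂ)/1) * ((Real.pi : ℝ) : ℂ) * (((Real.pi : ℝ) : ℂ))⁻¹^2 * (H 0 0) * (ρ τ 0 0)
      + ((-1:ℂ)/4) * ((Real.pi : ℝ) : ℂ) * (((Real.pi : ℝ) : ℂ))⁻¹^2 * (Complex.exp (-(Complex.I * (φ:ℂ))))^2 * (H 1 0) * (ρ τ 1 0)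
      + ((-1:ℂ)/4) * ((Real.pi : ℝ) : ℂ) * (((Real.pi : ℝ) : ℂ))⁻¹^2 * (Complex.exp (Complex.I * (φ:ℂ))) * (Complex.exp (-(Complex.I * (φ:ℂ)))) * (H 1 0) * (ρ τ 0 1)
      + ((-1:ℂ)/4) * ((Real.pi : ℝ) : ℂ) * (((Real.pi : ℝ) : ℂ))⁻¹^2 * (Complex.exp (Complex.I * (φ:ℂ))) * (Complex.exp (-(Complex.I * (φ:ℂ)))) * (H 0 1) * (ρ τ 1 0)
      + ((-1:ℂ)/4) * ((Real.pi : ℝ) : ℂ) * (((Real.pi : ℝ) : ℂ))⁻¹^2 * (Complex.exp (Complex.I * (φ:ℂ)))^2 * (H 0 1) * (ρ τ 0 1)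
      + ((-1:ℂ)/1) * ((Real.pi : ℝ) : ℂ) * (((Real.pi : ℝ) : ℂ))⁻¹^2 * ((Real.sin (θ/2) : ℝ) : ℂ)^2 * (H 1 1) * (ρ τ 1 1)
      + ((-1:ℂ)/4) * ((Real.pi : ℝ) : ℂ) * (((Real.pi : ℝ) : ℂ))⁻¹^2 * ((Real.sin (θ/2) : ℝ) : ℂ)^2 * (Complex.exp (-(Complex.I * (φ:ℂ))))^2 * (H 1 0) * (ρ τ 1 0)
      + ((-1:ℂ)/4) * ((Real.pi : ℝ) : ℂ) * (((Real.pi : ℝ) : ℂ))⁻¹^2 * ((Real.sin (θ/2) : ℝ) : ℂ)^2 * (Complex.exp (Complex.I * (φ:ℂ))) * (Complex.exp (-(Complex.I * (φ:ℂ)))) * (H 1 0) * (ρ τ 0 1)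
      + ((-1:ℂ)/4) * ((Real.pi : ℝ) : ℂ) * (((Real.pi : ℝ) : ℂ))⁻¹^2 * ((Real.sin (θ/2) : ℝ) : ℂ)^2 * (Complex.exp (Complex.I * (φ:ℂ))) * (Complex.exp (-(Complex.I * (φ:ℂ)))) * (H 0 1) * (ρ τ 1 0)
      + ((-1:ℂ)/4) * ((Real.pi : ℝ) : ℂ) * (((Real.pi : ℝ) : ℂ))⁻¹^2 * ((Real.sin (θ/2) : ℝ) : ℂ)^2 * (Complex.exp (Complex.I * (φ:ℂ)))^2 * (H 0 1) * (ρ τ 0 1)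
      + ((-1:ℂ)/2) * ((Real.pi : ℝ) : ℂ) * (((Real.pi : ℝ) : ℂ))⁻¹^2 * ((Real.cos (θ/2) : ℝ) : ℂ) * ((Real.sin (θ/2) : ℝ) : ℂ) * (Complex.exp (-(Complex.I * (φ:ℂ)))) * (H 1 1) * (ρ τ 1 0)
      + ((-1:ℂ)/2) * ((Real.pi : ℝ) : ℂ) * (((Real.pi : ℝ) : ℂ))⁻¹^2 * ((Real.cos (θ/2) : ℝ) : ℂ) * ((Real.sin (θ/2) : ℝ) : ℂ) * (Complex.exp (-(Complex.I * (φ:ℂ)))) * (H 1 0) * (ρ τ 1 1)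
      + ((-1:ℂ)/2) * ((Real.pi : ℝ) : ℂ) * (((Real.pi : ℝ) : ℂ))⁻¹^2 * ((Real.cos (θ/2) : ℝ) : ℂ) * ((Real.sin (θ/2) : ℝ) : ℂ) * (Complex.exp (-(Complex.I * (φ:ℂ)))) * (H 1 0) * (ρ τ 0 0)
      + ((-1:ℂ)/2) * ((Real.pi : ℝ) : ℂ) * (((Real.pi : ℝ) : ℂ))⁻¹^2 * ((Real.cos (θ/2) : ℝ) : ℂ) * ((Real.sin (θ/2) : ℝ) : ℂ) * (Complex.exp (-(Complex.I * (φ:ℂ)))) * (H 0 0) * (ρ τ 1 0)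
      + ((-1:ℂ)/2) * ((Real.pi : ℝ) : ℂ) * (((Real.pi : ℝ) : ℂ))⁻¹^2 * ((Real.cos (θ/2) : ℝ) : ℂ) * ((Real.sin (θ/2) : ℝ) : ℂ) * (Complex.exp (Complex.I * (φ:ℂ))) * (H 1 1) * (ρ τ 0 1)
      + ((-1:ℂ)/2) * ((Real.pi : ℝ) : ℂ) * (((Real.pi : ℝ) : ℂ))⁻¹^2 * ((Real.cos (θ/2) : ℝ) : ℂ) * ((Real.sin (θ/2) : ℝ) : ℂ) * (Complex.exp (Complex.I * (φ:ℂ))) * (H 0 1) * (ρ τ 1 1)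
      + ((-1:ℂ)/2) * ((Real.pi : ℝ) : ℂ) * (((Real.pi : ℝ) : ℂ))⁻¹^2 * ((Real.cos (θ/2) : ℝ) : ℂ) * ((Real.sin (θ/2) : ℝ) : ℂ) * (Complex.exp (Complex.I * (φ:ℂ))) * (H 0 1) * (ρ τ 0 0)
      + ((-1:ℂ)/2) * ((Real.pi : ℝ) : ℂ) * (((Real.pi : ℝ) : ℂ))⁻¹^2 * ((Real.cos (θ/2) : ℝ) : ℂ) * ((Real.sin (θ/2) : ℝ) : ℂ) * (Complex.exp (Complex.I * (φ:ℂ))) * (H 0 0) * (ρ τ 0 1)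
      + ((-1:ℂ)/1) * ((Real.pi : ℝ) : ℂ) * (((Real.pi : ℝ) : ℂ))⁻¹^2 * ((Real.cos (θ/2) : ℝ) : ℂ)^2 * (H 0 0) * (ρ τ 0 0)
      + ((-1:ℂ)/4) * ((Real.pi : ℝ) : ℂ) * (((Real.pi : ℝ) : ℂ))⁻¹^2 * ((Real.cos (θ/2) : ℝ) : ℂ)^2 * (Complex.exp (-(Complex.I * (φ:ℂ))))^2 * (H 1 0) * (ρ τ 1 0)
      + ((-1:ℂ)/4) * ((Real.pi : ℝ) : ℂ) * (((Real.pi : ℝ) : ℂ))⁻¹^2 * ((Real.cos (θ/2) : ℝ) : ℂ)^2 * (Complex.exp (Complex.I * (φ:ℂ))) * (Complex.exp (-(Complex.I * (φ:ℂ)))) * (H 1 0) * (ρ τ 0 1)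
      + ((-1:ℂ)/4) * ((Real.pi : ℝ) : ℂ) * (((Real.pi : ℝ) : ℂ))⁻¹^2 * ((Real.cos (θ/2) : ℝ) : ℂ)^2 * (Complex.exp (Complex.I * (φ:ℂ))) * (Complex.exp (-(Complex.I * (φ:ℂ)))) * (H 0 1) * (ρ τ 1 0)
      + ((-1:ℂ)/4) * ((Real.pi : ℝ) : ℂ) * (((Real.pi : ℝ) : ℂ))⁻¹^2 * ((Real.cos (θ/2) : ℝ) : ℂ)^2 * (Complex.exp (Complex.I * (φ:ℂ)))^2 * (H 0 1) * (ρ τ 0 1)) * h1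
    + (((-1:ℂ)/2) * ((Real.pi : ℝ) : ℂ) * (((Real.pi : ℝ) : ℂ))⁻¹^2 * (H 1 0) * (ρ τ 0 1)
      + ((-1:ℂ)/2) * ((Real.pi : ℝ) : ℂ) * (((Real.pi : ℝ) : ℂ))⁻¹^2 * (H 0 1) * (ρ τ 1 0)) * h2
    + (((-1:ℂ)/2) * (((Real.pi : ℝ) : ℂ))⁻¹ * (H 1 0) * (ρ τ 0 1)
      + ((-1:ℂ)/2) * (((Real.pi : ℝ) : ℂ))⁻¹ * (H 0 1) * (ρ τ 1 0)
      + ((-1:ℂ)/1) * (((Real.pi : ℝ) : ℂ))⁻¹ * (H 0 0) * (ρ τ 0 0)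
      + ((-1:ℂ)/1) * (((Real.pi : ℝ) : ℂ))⁻¹ * ((Real.sin (θ/2) : ℝ) : ℂ)^2 * (H 1 1) * (ρ τ 1 1)
      + ((1:ℂ)/1) * (((Real.pi : ℝ) : ℂ))⁻¹ * ((Real.sin (θ/2) : ℝ) : ℂ)^2 * (H 0 0) * (ρ τ 0 0)
      + ((-1:ℂ)/2) * (((Real.pi : ℝ) : ℂ))⁻¹ * ((Real.cos (θ/2) : ℝ) : ℂ) * ((Real.sin (θ/2) : ℝ) : ℂ) * (Complex.exp (-(Complex.I * (φ:ℂ)))) * (H 1 1) * (ρ τ 1 0)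
      + ((-1:ℂ)/2) * (((Real.pi : ℝ) : ℂ))⁻¹ * ((Real.cos (θ/2) : ℝ) : ℂ) * ((Real.sin (θ/2) : ℝ) : ℂ) * (Complex.exp (-(Complex.I * (φ:ℂ)))) * (H 1 0) * (ρ τ 1 1)
      + ((-1:ℂ)/2) * (((Real.pi : ℝ) : ℂ))⁻¹ * ((Real.cos (θ/2) : ℝ) : ℂ) * ((Real.sin (θ/2) : ℝ) : ℂ) * (Complex.exp (-(Complex.I * (φ:ℂ)))) * (H 1 0) * (ρ τ 0 0)
      + ((-1:ℂ)/2) * (((Real.pi : ℝ) : ℂ))⁻¹ * ((Real.cos (θ/2) : ℝ) : ℂ) * ((Real.sin (θ/2) : ℝ) : ℂ) * (Complex.exp (-(Complex.I * (φ:ℂ)))) * (H 0 0) * (ρ τ 1 0)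
      + ((-1:ℂ)/2) * (((Real.pi : ℝ) : ℂ))⁻¹ * ((Real.cos (θ/2) : ℝ) : ℂ) * ((Real.sin (θ/2) : ℝ) : ℂ) * (Complex.exp (Complex.I * (φ:ℂ))) * (H 1 1) * (ρ τ 0 1)
      + ((-1:ℂ)/2) * (((Real.pi : ℝ) : ℂ))⁻¹ * ((Real.cos (θ/2) : ℝ) : ℂ) * ((Real.sin (θ/2) : ℝ) : ℂ) * (Complex.exp (Complex.I * (φ:ℂ))) * (H 0 1) * (ρ τ 1 1)
      + ((-1:ℂ)/2) * (((Real.pi : ℝ) : ℂ))⁻¹ * ((Real.cos (θ/2) : ℝ) : ℂ) * ((Real.sin (θ/2) : ℝ) : ℂ) * (Complex.exp (Complex.I * (φ:ℂ))) * (H 0 1) * (ρ τ 0 0)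
      + ((-1:ℂ)/2) * (((Real.pi : ℝ) : ℂ))⁻¹ * ((Real.cos (θ/2) : ℝ) : ℂ) * ((Real.sin (θ/2) : ℝ) : ℂ) * (Complex.exp (Complex.I * (φ:ℂ))) * (H 0 0) * (ρ τ 0 1)) * hv
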